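/- Let $a_1,\dots,a_n$ be real numbers and $b_1,\dots,b_n$ be positive real numbers with the $b_i$ pairwise distinct and all $a_i$ nonzero. Then the function $\lambda \mapsto \sum_{i=1}^n a_i b_i^{\lambda}$ has at most $n-1$ real zeros. -/

import Mathlib

open Real Finset

private lemma key : ∀ n : ℕ, 1 ≤ n → ∀ (a b : Fin n → ℝ), (∀ i, 0 < b i) →
    Function.Injective b → (∀ i, a i ≠ 0) → ∀ x : Fin n → ℝ, StrictMono x →
    ¬ (∀ k, ∑ i, a i * (b i) ^ (x k) = 0) := by
  intro n hn
  induction n, hn using Nat.le_induction with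
  | base =>
    intro a b hb hbinj ha x hx h
    have h0 := h 0
    rw [Fin.sum_univ_one] at h0
    exact mul_ne_zero (ha 0) (Real.rpow_pos_of_pos (hb 0) (x 0)).ne' h0
  | succ n hn IH =>
    intro a b hb hbinj ha x hx h
    set c := b (Fin.last n) with hcdef
    have hc : 0 < c := hb _
    set g : ℝ → ℝ := fun t => ∑ i, a i * (b i / c) ^ t with hgdef
    set g1 : ℝ → ℝ := fun t => ∑ i, a i * (Real.log (b i / c) * (b i / c) ^ t) with hg1def
    have hg0 : ∀ k, g (x k) = 0 := by
      intro k
      have hk := h k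
      have : g (x k) = (∑ i, a i * (b i) ^ (x k)) / c ^ (x k) := by
        rw [Finset.sum_div]
        refine Finset.sum_congr rfl fun i _ => ?_
        rw [Real.div_rpow (hb i).le hc.le, mul_div_assoc]
      rw [this, hk, zero_div]
    have hderiv : ∀ t, HasDerivAt g (g1 t) t := by
      intro t
      apply HasDerivAt.fun_sum
      intro i _
      have := (hasStrictDerivAt_const_rpow (div_pos (hb i) hc) t).hasDerivAt.const_mul (a i)
      convert this using 1 <;> first | rfl | ring
    -- Rolle between consecutive zeros
    have hroll : ∀ k : Fin n, ∃ y, y ∈ Set.Ioo (x k.castSucc) (x k.succ) ∧ g1 y = 0 := by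
      intro k
      have hlt : x k.castSucc < x k.succ := hx (Fin.castSucc_lt_succ (i := k))
      have hcont : ContinuousOn g (Set.Icc (x k.castSucc) (x k.succ)) :=
        fun t _ => (hderiv t).continuousAt.continuousWithinAt
      have heq : g (x k.castSucc) = g (x k.succ) := by rw [hg0, hg0]
      obtain ⟨y, hy1, hy2⟩ := exists_hasDerivAt_eq_zero hlt hcont heq (fun y _ => hderiv y)
      exact ⟨y, hy1, hy2⟩
    choose y hy1 hy2 using hroll
    have hymono : StrictMono y := by
      intro k l hkl
      calc y k < x k.succ := (hy1 k).2
        _ ≤ x l.castSucc := hx.monotone (Fin.succ_le_castSucc_iff.mpr hkl)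
        _ < y l := (hy1 l).1
    set a' : Fin n → ℝ := fun i => a i.castSucc * Real.log (b i.castSucc / c) with ha'def
    set b' : Fin n → ℝ := fun i => b i.castSucc / c with hb'def
    have hsum : ∀ t, g1 t = ∑ i, a' i * (b' i) ^ t := by
      intro t
      rw [hg1def]
      simp only
      rw [Fin.sum_univ_castSucc]
      have : b (Fin.last n) / c = 1 := div_self hc.ne'
      rw [this, Real.log_one, zero_mul, mul_zero, add_zero]
      refine Finset.sum_congr rfl fun i _ => ?_
      ring
    have hb' : ∀ i, 0 < b' i := fun i => div_pos (hb _) hc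
    have hb'inj : Function.Injective b' := by
      intro i j hij
      have : b i.castSucc = b j.castSucc := by
        simp only [hb'def] at hij
        exact (div_left_inj' hc.ne').mp hij
      exact Fin.castSucc_injective n (hbinj this)
    have ha' : ∀ i, a' i ≠ 0 := by
      intro i
      apply mul_ne_zero (ha _)
      have hne : b i.castSucc ≠ c := fun hh => absurd (hbinj hh)
        (Fin.ne_of_lt (Fin.castSucc_lt_last i))
      have h1 : b i.castSucc / c ≠ 1 := by
        intro hh
        rw [div_eq_one_iff_eq hc.ne'] at hh
        exact hne hh
      exact Real.log_ne_zero_of_pos_of_ne_one (div_pos (hb _) hc) h1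
    exact IH a' b' hb' hb'inj ha' y hymono (fun k => by rw [← hsum]; exact hy2 k)

theorem stmt_0 (n : ℕ) (hn : 1 ≤ n) (a b : Fin n → ℝ)
    (hb : ∀ i, 0 < b i) (hbinj : Function.Injective b) (ha : ∀ i, a i ≠ 0) :
    {lam : ℝ | ∑ i, a i * (b i) ^ lam = 0}.Finite ∧
    {lam : ℝ | ∑ i, a i * (b i) ^ lam = 0}.ncard ≤ n - 1 := by
  set S := {lam : ℝ | ∑ i, a i * (b i) ^ lam = 0} with hSdef
  have hbound : ∀ T : Finset ℝ, ↑T ⊆ S → T.card ≤ n - 1 := by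
    intro T hT
    by_contra hTc
    push_neg at hTc
    have hTn : n ≤ T.card := by omega
    obtain ⟨T', hT', hT'card⟩ := Finset.exists_subset_card_eq hTn
    have hx : StrictMono (fun k : Fin n => ((T'.orderIsoOfFin hT'card) k : ℝ)) :=
      fun i j hij => (T'.orderIsoOfFin hT'card).strictMono hij
    exact key n hn a b hb hbinj ha _ hx
      (fun k => hT (hT' ((T'.orderIsoOfFin hT'card) k).2))
  have hfin : S.Finite := by
    by_contra hinf
    obtain ⟨T, hT, hTcard⟩ := Set.Infinite.exists_subset_card_eq hinf n
    have := hbound T hT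
    omega
  refine ⟨hfin, ?_⟩
  have := hbound hfin.toFinset (by simp)
  rwa [← Set.ncard_coe_finset, hfin.coe_toFinset] at this
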